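/- Consider the electric network on n+2 vertices consisting of a set L of internal edges together with exactly two boundary edges g = (a_1, b_1) and h = (a_2, b_2), where a_1, a_2 are internal vertices and b_1, b_2 are two distinct boundary vertices with no other incident edges. Let v be the voltage with v(b_1)=0, v(b_2)=1 and ṽ the voltage in the network with the conductances of g and h swapped, with ṽ(b_1)=1, ṽ(b_2)=0. If r(h) ≥ r(g) (resistances r = 1/c), then for any internal vertex w: v(w) + ṽ(w) ≥ 2 r(g)/(r(h)+r(g)). In particular, if r(g) ≥ ε₀ r(h) with ε₀ ∈ (0,1), then max(v(w), ṽ(w)) ≥ ε₀/(1+ε₀). -/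

import Mathlib

open Finset
set_option linter.unusedSectionVars false
set_option linter.unusedVariables false
section AuxNet
variable {V : Type*} [Fintype V] [DecidableEq V]
lemma aux_green (c : V → V → ℝ) (hs : ∀ x y, c x y = c y x) (f φ : V → ℝ) :
    ∑ x, ∑ y, c x y * (f y - f x) * (φ y - φ x)
      = -2 * ∑ x, φ x * ∑ y, c x y * (f y - f x) := by
  have h1 : ∀ x y : V, c x y * (f y - f x) * (φ y - φ x)
      = c x y * (f y - f x) * φ y - c x y * (f y - f x) * φ x := fun x y => by ring
  have hA : ∑ x : V, ∑ y : V, c x y * (f y - f x) * φ y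
      = - ∑ x : V, ∑ y : V, c x y * (f y - f x) * φ x := by
    rw [Finset.sum_comm, ← Finset.sum_neg_distrib]
    refine Finset.sum_congr rfl fun y _ => ?_
    rw [← Finset.sum_neg_distrib]
    refine Finset.sum_congr rfl fun x _ => ?_
    rw [hs x y]; ring
  have h2 : ∑ x : V, ∑ y : V, c x y * (f y - f x) * φ x
      = ∑ x : V, φ x * ∑ y : V, c x y * (f y - f x) := by
    refine Finset.sum_congr rfl fun x _ => ?_
    rw [Finset.mul_sum]
    exact Finset.sum_congr rfl fun y _ => by ring
  simp only [h1, Finset.sum_sub_distrib]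
  rw [hA, h2]
  ring

lemma aux_total (c : V → V → ℝ) (hs : ∀ x y, c x y = c y x) (f : V → ℝ) :
    ∑ x, ∑ y, c x y * (f y - f x) = 0 := by
  have := aux_green c hs f (fun _ => 1)
  simp only [sub_self, mul_zero, Finset.sum_const_zero, one_mul] at this
  linarith

lemma aux_single (c : V → V → ℝ) (hs : ∀ x y, c x y = c y x) (f : V → ℝ)
    (a b : V) (hdeg : ∀ x, x ≠ a → c x b = 0) :
    ∑ y, c b y * (f y - f b) = c a b * (f a - f b) := by
  rw [Finset.sum_eq_single a]
  · rw [hs b a]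
  · intro y _ hy
    rw [hs b y, hdeg y hy, zero_mul]
  · simp

lemma aux_fourpair (k : V → V → ℝ) (a₁ a₂ b₁ b₂ : V)
    (hb : b₁ ≠ b₂) (ha₁b₁ : a₁ ≠ b₁) (ha₁b₂ : a₁ ≠ b₂) (ha₂b₁ : a₂ ≠ b₁) (ha₂b₂ : a₂ ≠ b₂)
    (hzero : ∀ x y, s(x,y) ≠ s(a₁,b₁) → s(x,y) ≠ s(a₂,b₂) → k x y = 0) :
    ∑ x, ∑ y, k x y = k a₁ b₁ + k b₁ a₁ + k a₂ b₂ + k b₂ a₂ := by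
  classical
  have h1 : ∑ x, ∑ y, k x y = ∑ p ∈ (univ ×ˢ univ : Finset (V × V)), k p.1 p.2 :=
    (Finset.sum_product univ univ (fun p => k p.1 p.2)).symm
  have h2 : ∑ p ∈ (univ ×ˢ univ : Finset (V × V)), k p.1 p.2
      = ∑ p ∈ ({((a₁:V),b₁),(b₁,a₁),(a₂,b₂),(b₂,a₂)} : Finset (V × V)), k p.1 p.2 := by
    symm
    apply Finset.sum_subset (fun p _ => by simp)
    intro p _ hp
    simp only [Finset.mem_insert, Finset.mem_singleton, Prod.ext_iff] at hp
    push_neg at hp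
    apply hzero
    · intro heq; rw [Sym2.eq_iff] at heq; tauto
    · intro heq; rw [Sym2.eq_iff] at heq; tauto
  rw [h1, h2]
  rw [Finset.sum_insert (by simp [Prod.ext_iff]; tauto),
    Finset.sum_insert (by simp [Prod.ext_iff]; tauto),
    Finset.sum_insert (by simp [Prod.ext_iff]; tauto), Finset.sum_singleton]
  ring

lemma aux_foursub (k : V → V → ℝ) (hkn : ∀ x y, 0 ≤ k x y) (a₁ a₂ b₁ b₂ : V)
    (hb : b₁ ≠ b₂) (ha₁b₁ : a₁ ≠ b₁) (ha₁b₂ : a₁ ≠ b₂) (ha₂b₁ : a₂ ≠ b₁) (ha₂b₂ : a₂ ≠ b₂) :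
    k a₁ b₁ + k b₁ a₁ + k a₂ b₂ + k b₂ a₂ ≤ ∑ x, ∑ y, k x y := by
  classical
  have h1 : ∑ x, ∑ y, k x y = ∑ p ∈ (univ ×ˢ univ : Finset (V × V)), k p.1 p.2 :=
    (Finset.sum_product univ univ (fun p => k p.1 p.2)).symm
  have h3 : k a₁ b₁ + k b₁ a₁ + k a₂ b₂ + k b₂ a₂
      = ∑ p ∈ ({((a₁:V),b₁),(b₁,a₁),(a₂,b₂),(b₂,a₂)} : Finset (V × V)), k p.1 p.2 := by
    rw [Finset.sum_insert (by simp [Prod.ext_iff]; tauto),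
      Finset.sum_insert (by simp [Prod.ext_iff]; tauto),
      Finset.sum_insert (by simp [Prod.ext_iff]; tauto), Finset.sum_singleton]
    ring
  rw [h1, h3]
  exact Finset.sum_le_sum_of_subset_of_nonneg (fun p _ => by simp)
    (fun p _ _ => hkn p.1 p.2)

lemma aux_minprin (c : V → V → ℝ) (hs : ∀ x y, c x y = c y x) (hnn : ∀ x y, 0 ≤ c x y)
    (a₁ a₂ b₁ b₂ : V)
    (hdeg₁ : ∀ x, x ≠ a₁ → c x b₁ = 0) (hdeg₂ : ∀ x, x ≠ a₂ → c x b₂ = 0)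
    (hconn : (SimpleGraph.fromRel fun x y => 0 < c x y).Connected)
    (s : V → ℝ)
    (hsh : ∀ x, x ≠ b₁ → x ≠ b₂ → x ≠ a₁ → x ≠ a₂ → ∑ y, c x y * (s y - s x) = 0)
    (w : V) (hwb₁ : w ≠ b₁) (hwb₂ : w ≠ b₂) :
    min (s a₁) (s a₂) ≤ s w := by
  classical
  set W : Finset V := univ.filter (fun x => x ≠ b₁ ∧ x ≠ b₂) with hW
  have hwW : w ∈ W := by simp [hW, hwb₁, hwb₂]
  obtain ⟨x₀, hx₀W, hmin⟩ := Finset.exists_min_image W s ⟨w, hwW⟩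
  have hx₀ : x₀ ≠ b₁ ∧ x₀ ≠ b₂ := by simpa [hW] using hx₀W
  suffices h : min (s a₁) (s a₂) ≤ s x₀ by exact h.trans (hmin w hwW)
  have key : ∀ (n : ℕ) (x : V) (p : (SimpleGraph.fromRel fun x y => 0 < c x y).Walk x b₁),
      p.length ≤ n → x ≠ b₁ → x ≠ b₂ → s x = s x₀ → min (s a₁) (s a₂) ≤ s x₀ := by
    intro n
    induction n with
    | zero =>
      intro x p hl hx1 _ _
      cases p with
      | nil => exact absurd rfl hx1
      | cons hadj q => simp at hl
    | succ n ih =>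
      intro x p hl hx1 hx2 hxm
      cases p with
      | nil => exact absurd rfl hx1
      | @cons _ y _ hadj q =>
        by_cases hxa : x = a₁ ∨ x = a₂
        · rcases hxa with h | h
          · rw [← hxm, ← h]; exact min_le_of_left_le (by rw [h])
          · rw [← hxm, ← h]; exact min_le_of_right_le (by rw [h])
        · push_neg at hxa
          have hcxy : 0 < c x y := by
            rw [SimpleGraph.fromRel_adj] at hadj
            rcases hadj.2 with h | h
            · exact h
            · rw [hs]; exact h
          have hyb₁ : y ≠ b₁ := by
            intro h; rw [h, hdeg₁ x hxa.1] at hcxy; exact lt_irrefl _ hcxy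
          have hyb₂ : y ≠ b₂ := by
            intro h; rw [h, hdeg₂ x hxa.2] at hcxy; exact lt_irrefl _ hcxy
          have h0 := hsh x hx1 hx2 hxa.1 hxa.2
          have hterm : ∀ z ∈ (univ : Finset V), 0 ≤ c x z * (s z - s x) := by
            intro z _
            rcases lt_or_eq_of_le (hnn x z) with hz | hz
            · have hz1 : z ≠ b₁ := by
                intro h; rw [h, hdeg₁ x hxa.1] at hz; exact lt_irrefl _ hz
              have hz2 : z ≠ b₂ := by
                intro h; rw [h, hdeg₂ x hxa.2] at hz; exact lt_irrefl _ hz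
              have hzm : s x₀ ≤ s z := hmin z (by simp [hW, hz1, hz2])
              have : s x ≤ s z := by rw [hxm]; exact hzm
              exact mul_nonneg hz.le (by linarith)
            · rw [← hz, zero_mul]
          have hy0 : c x y * (s y - s x) = 0 :=
            (Finset.sum_eq_zero_iff_of_nonneg hterm).1 h0 y (mem_univ y)
          have hsy : s y = s x₀ := by
            rcases mul_eq_zero.1 hy0 with h | h
            · exact absurd h hcxy.ne'
            · rw [← hxm]; linarith
          exact ih y q (by simpa using hl) hyb₁ hyb₂ hsy
  obtain ⟨p⟩ := hconn x₀ b₁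
  exact key p.length x₀ p le_rfl hx₀.1 hx₀.2 rfl

lemma aux_two (b₁ b₂ : V) (hb : b₁ ≠ b₂) (F : V → ℝ)
    (hF : ∀ x, x ≠ b₁ → x ≠ b₂ → F x = 0) (φ : V → ℝ) :
    ∑ x, φ x * F x = φ b₁ * F b₁ + φ b₂ * F b₂ := by
  have hp : ∑ x ∈ ({b₁, b₂} : Finset V), φ x * F x = φ b₁ * F b₁ + φ b₂ * F b₂ :=
    Finset.sum_pair hb
  rw [← hp]
  symm
  apply Finset.sum_subset (Finset.subset_univ _)
  intro x _ hx
  simp only [Finset.mem_insert, Finset.mem_singleton] at hx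
  push_neg at hx
  rw [hF x hx.1 hx.2, mul_zero]

lemma aux_arith (rg rh i : ℝ) (hrg : 0 < rg) (hrh : 0 < rh) (hr : rg ≤ rh)
    (hi0 : 0 ≤ i) (hquad : i * i * (rg + rh) ≤ i) :
    2 * rg / (rh + rg) ≤ 1 + i * rg - i * rh := by
  rw [div_le_iff₀ (by linarith)]
  rcases hi0.lt_or_eq with hi | hi
  · have hit : i * (rg + rh) ≤ 1 := by
      have := (mul_le_mul_iff_of_pos_left hi).1 (by nlinarith : i * (i * (rg + rh)) ≤ i * 1)
      linarith
    nlinarith [mul_le_mul_of_nonneg_right hit (sub_nonneg.2 hr)]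
  · rw [← hi]; nlinarith

lemma aux_arith2 (rg rh ε₀ : ℝ) (hrg : 0 < rg) (hrh : 0 < rh) (hε0 : 0 < ε₀)
    (hεr : ε₀ * rh ≤ rg) :
    ε₀ / (1 + ε₀) * 2 ≤ 2 * rg / (rh + rg) := by
  rw [div_mul_eq_mul_div, div_le_div_iff₀ (by linarith) (by linarith)]
  nlinarith
end AuxNet



/- **Voltage lower bound in a network with exactly two boundary edges.**
The network has internal edges together with exactly two boundary edges
`g = (a₁, b₁)` and `h = (a₂, b₂)`, where `b₁ ≠ b₂` are degree-one boundary vertices.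
`v` is the voltage with `v b₁ = 0`, `v b₂ = 1`, and `vt` is the voltage in the network
`c'` obtained by swapping the conductances of `g` and `h`, with `vt b₁ = 1`,
`vt b₂ = 0`. If `r(h) ≥ r(g)` (resistances `r = 1/c`), then for any internal vertex
`w`: `v w + vt w ≥ 2 r(g)/(r(h)+r(g))`; in particular if `r(g) ≥ ε₀ r(h)` with
`ε₀ ∈ (0,1)` then `max (v w) (vt w) ≥ ε₀/(1+ε₀)`. -/
theorem stmt_10 {V : Type*} [Fintype V] [DecidableEq V]
    (c c' : V → V → ℝ)
    (hsymm : ∀ x y, c x y = c y x) (hnonneg : ∀ x y, 0 ≤ c x y) (hdiag : ∀ x, c x x = 0)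
    (a₁ a₂ b₁ b₂ w : V)
    (hb : b₁ ≠ b₂) (ha₁b₁ : a₁ ≠ b₁) (ha₁b₂ : a₁ ≠ b₂) (ha₂b₁ : a₂ ≠ b₁) (ha₂b₂ : a₂ ≠ b₂)
    (hwb₁ : w ≠ b₁) (hwb₂ : w ≠ b₂)
    (hdeg₁ : ∀ x, x ≠ a₁ → c x b₁ = 0)
    (hdeg₂ : ∀ x, x ≠ a₂ → c x b₂ = 0)
    (hg : 0 < c a₁ b₁) (hh : 0 < c a₂ b₂)
    (hconn : (SimpleGraph.fromRel fun x y => 0 < c x y).Connected)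
    (hc'g : c' a₁ b₁ = c a₂ b₂) (hc'g' : c' b₁ a₁ = c a₂ b₂)
    (hc'h : c' a₂ b₂ = c a₁ b₁) (hc'h' : c' b₂ a₂ = c a₁ b₁)
    (hc'rest : ∀ x y : V, s(x, y) ≠ s(a₁, b₁) → s(x, y) ≠ s(a₂, b₂) → c' x y = c x y)
    (v vt : V → ℝ)
    (hvb₁ : v b₁ = 0) (hvb₂ : v b₂ = 1)
    (hvtb₁ : vt b₁ = 1) (hvtb₂ : vt b₂ = 0)
    (hharm : ∀ x, x ≠ b₁ → x ≠ b₂ → ∑ y, c x y * (v y - v x) = 0)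
    (hharm' : ∀ x, x ≠ b₁ → x ≠ b₂ → ∑ y, c' x y * (vt y - vt x) = 0)
    (hr : (c a₁ b₁)⁻¹ ≤ (c a₂ b₂)⁻¹) :
    2 * (c a₁ b₁)⁻¹ / ((c a₂ b₂)⁻¹ + (c a₁ b₁)⁻¹) ≤ v w + vt w ∧
      ∀ ε₀ : ℝ, 0 < ε₀ → ε₀ < 1 → ε₀ * (c a₂ b₂)⁻¹ ≤ (c a₁ b₁)⁻¹ →
        ε₀ / (1 + ε₀) ≤ max (v w) (vt w) := by
  classical
  -- properties of the swapped conductance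
  have hc'deg₁ : ∀ x, x ≠ a₁ → c' x b₁ = 0 := by
    intro x hx
    rw [hc'rest x b₁ ?_ ?_]
    · exact hdeg₁ x hx
    · intro heq; rw [Sym2.eq_iff] at heq
      rcases heq with ⟨h1, h2⟩ | ⟨h1, h2⟩
      · exact hx h1
      · exact ha₁b₁ h2.symm
    · intro heq; rw [Sym2.eq_iff] at heq
      rcases heq with ⟨h1, h2⟩ | ⟨h1, h2⟩
      · exact hb h2
      · exact ha₂b₁ h2.symm
  have hc'deg₂ : ∀ x, x ≠ a₂ → c' x b₂ = 0 := by
    intro x hx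
    rw [hc'rest x b₂ ?_ ?_]
    · exact hdeg₂ x hx
    · intro heq; rw [Sym2.eq_iff] at heq
      rcases heq with ⟨h1, h2⟩ | ⟨h1, h2⟩
      · exact hb h2.symm
      · exact ha₁b₂ h2.symm
    · intro heq; rw [Sym2.eq_iff] at heq
      rcases heq with ⟨h1, h2⟩ | ⟨h1, h2⟩
      · exact hx h1
      · exact ha₂b₂ h2.symm
  have hc'symm : ∀ x y, c' x y = c' y x := by
    intro x y
    by_cases h1 : s(x, y) = s(a₁, b₁)
    · rw [Sym2.eq_iff] at h1
      rcases h1 with ⟨rfl, rfl⟩ | ⟨rfl, rfl⟩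
      · rw [hc'g, hc'g']
      · rw [hc'g, hc'g']
    · by_cases h2 : s(x, y) = s(a₂, b₂)
      · rw [Sym2.eq_iff] at h2
        rcases h2 with ⟨rfl, rfl⟩ | ⟨rfl, rfl⟩
        · rw [hc'h, hc'h']
        · rw [hc'h, hc'h']
      · have h1' : s(y, x) ≠ s(a₁, b₁) := by rw [Sym2.eq_swap]; exact h1
        have h2' : s(y, x) ≠ s(a₂, b₂) := by rw [Sym2.eq_swap]; exact h2
        rw [hc'rest x y h1 h2, hc'rest y x h1' h2', hsymm]
  -- conservation of current
  have hcons_v : c a₁ b₁ * (v a₁ - v b₁) + c a₂ b₂ * (v a₂ - v b₂) = 0 := by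
    have h1 := aux_single c hsymm v a₁ b₁ hdeg₁
    have h2 := aux_single c hsymm v a₂ b₂ hdeg₂
    have htwo := aux_two b₁ b₂ hb (fun x => ∑ y, c x y * (v y - v x)) hharm (fun _ => (1 : ℝ))
    simp only [one_mul] at htwo
    rw [aux_total c hsymm v] at htwo
    rw [h1, h2] at htwo
    linarith
  have hcons_vt : c a₂ b₂ * (vt a₁ - vt b₁) + c a₁ b₁ * (vt a₂ - vt b₂) = 0 := by
    have h1 := aux_single c' hc'symm vt a₁ b₁ hc'deg₁
    have h2 := aux_single c' hc'symm vt a₂ b₂ hc'deg₂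
    have htwo := aux_two b₁ b₂ hb (fun x => ∑ y, c' x y * (vt y - vt x)) hharm' (fun _ => (1 : ℝ))
    simp only [one_mul] at htwo
    rw [aux_total c' hc'symm vt] at htwo
    rw [h1, h2, hc'g, hc'h] at htwo
    linarith
  -- Green identities
  have hE1 : ∑ x, ∑ y, c x y * (v y - v x) * (vt y - vt x)
      = -2 * (vt b₁ * (c a₁ b₁ * (v a₁ - v b₁)) + vt b₂ * (c a₂ b₂ * (v a₂ - v b₂))) := by
    rw [aux_green c hsymm v vt,
      aux_two b₁ b₂ hb (fun x => ∑ y, c x y * (v y - v x)) hharm vt,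
      aux_single c hsymm v a₁ b₁ hdeg₁, aux_single c hsymm v a₂ b₂ hdeg₂]
  have hE2 : ∑ x, ∑ y, c' x y * (vt y - vt x) * (v y - v x)
      = -2 * (v b₁ * (c a₂ b₂ * (vt a₁ - vt b₁)) + v b₂ * (c a₁ b₁ * (vt a₂ - vt b₂))) := by
    rw [aux_green c' hc'symm vt v,
      aux_two b₁ b₂ hb (fun x => ∑ y, c' x y * (vt y - vt x)) hharm' v,
      aux_single c' hc'symm vt a₁ b₁ hc'deg₁, aux_single c' hc'symm vt a₂ b₂ hc'deg₂,
      hc'g, hc'h]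
  have hD : ∑ x, ∑ y, (c x y - c' x y) * ((v y - v x) * (vt y - vt x))
      = (c a₁ b₁ - c' a₁ b₁) * ((v b₁ - v a₁) * (vt b₁ - vt a₁))
        + (c b₁ a₁ - c' b₁ a₁) * ((v a₁ - v b₁) * (vt a₁ - vt b₁))
        + (c a₂ b₂ - c' a₂ b₂) * ((v b₂ - v a₂) * (vt b₂ - vt a₂))
        + (c b₂ a₂ - c' b₂ a₂) * ((v a₂ - v b₂) * (vt a₂ - vt b₂)) :=
    aux_fourpair (fun x y => (c x y - c' x y) * ((v y - v x) * (vt y - vt x)))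
      a₁ a₂ b₁ b₂ hb ha₁b₁ ha₁b₂ ha₂b₁ ha₂b₂
      (fun x y h1 h2 => by
        show (c x y - c' x y) * ((v y - v x) * (vt y - vt x)) = 0
        rw [hc'rest x y h1 h2]; ring)
  rw [hc'g, hc'g', hc'h, hc'h', hsymm b₁ a₁, hsymm b₂ a₂] at hD
  have hSplit : ∑ x, ∑ y, (c x y - c' x y) * ((v y - v x) * (vt y - vt x))
      = (∑ x, ∑ y, c x y * (v y - v x) * (vt y - vt x))
        - ∑ x, ∑ y, c' x y * (vt y - vt x) * (v y - v x) := by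
    rw [← Finset.sum_sub_distrib]
    refine Finset.sum_congr rfl fun x _ => ?_
    rw [← Finset.sum_sub_distrib]
    exact Finset.sum_congr rfl fun y _ => by ring
  rw [hE1, hE2] at hSplit
  rw [hSplit] at hD
  rw [hvb₁, hvb₂] at hD hcons_v
  rw [hvtb₁, hvtb₂] at hD hcons_vt
  -- reciprocity : the two currents agree
  have hbr : c a₂ b₂ * ((v a₁) * (vt a₁) - v a₁ + vt a₂ - (v a₂) * (vt a₂)) = 0 := by
    linear_combination (-(vt a₂)) * hcons_v + (v a₁) * hcons_vt
  have hT : (v a₁) * (vt a₁) - v a₁ + vt a₂ - (v a₂) * (vt a₂) = 0 :=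
    (mul_eq_zero.1 hbr).resolve_left hh.ne'
  have hij : c a₁ b₁ * v a₁ = c a₁ b₁ * vt a₂ := by
    linear_combination (-1/2 : ℝ) * hD + (c a₂ b₂ - c a₁ b₁) * hT
  -- energy bound
  have hEvv : ∑ x, ∑ y, c x y * (v y - v x) * (v y - v x)
      = -2 * (v b₁ * (c a₁ b₁ * (v a₁ - v b₁)) + v b₂ * (c a₂ b₂ * (v a₂ - v b₂))) := by
    rw [aux_green c hsymm v v,
      aux_two b₁ b₂ hb (fun x => ∑ y, c x y * (v y - v x)) hharm v,
      aux_single c hsymm v a₁ b₁ hdeg₁, aux_single c hsymm v a₂ b₂ hdeg₂]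
  have hElow : c a₁ b₁ * (v b₁ - v a₁) * (v b₁ - v a₁)
        + c b₁ a₁ * (v a₁ - v b₁) * (v a₁ - v b₁)
        + c a₂ b₂ * (v b₂ - v a₂) * (v b₂ - v a₂)
        + c b₂ a₂ * (v a₂ - v b₂) * (v a₂ - v b₂)
      ≤ ∑ x, ∑ y, c x y * (v y - v x) * (v y - v x) :=
    aux_foursub (fun x y => c x y * (v y - v x) * (v y - v x))
      (fun x y => by
        show 0 ≤ c x y * (v y - v x) * (v y - v x)
        rw [mul_assoc]; exact mul_nonneg (hnonneg x y) (mul_self_nonneg _))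
      a₁ a₂ b₁ b₂ hb ha₁b₁ ha₁b₂ ha₂b₁ ha₂b₂
  rw [hEvv] at hElow
  rw [hsymm b₁ a₁, hsymm b₂ a₂, hvb₁, hvb₂] at hElow
  -- basic current facts
  have hi0 : 0 ≤ c a₁ b₁ * v a₁ := by
    nlinarith [mul_nonneg hg.le (mul_self_nonneg (v a₁)),
      mul_nonneg hh.le (mul_self_nonneg (1 - v a₂))]
  have hkey : c a₁ b₁ * v a₁ * v a₁ + c a₂ b₂ * (1 - v a₂) * (1 - v a₂) ≤ c a₁ b₁ * v a₁ := by
    nlinarith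
  have hi_eq : c a₁ b₁ * v a₁ = c a₂ b₂ * (1 - v a₂) := by linarith
  have hquad : (c a₁ b₁ * v a₁) * (c a₁ b₁ * v a₁) * ((c a₁ b₁)⁻¹ + (c a₂ b₂)⁻¹)
      ≤ c a₁ b₁ * v a₁ := by
    have h1 : (c a₁ b₁ * v a₁) * (c a₁ b₁ * v a₁) * (c a₁ b₁)⁻¹
        = c a₁ b₁ * v a₁ * v a₁ := by
      field_simp
    have h2 : (c a₁ b₁ * v a₁) * (c a₁ b₁ * v a₁) * (c a₂ b₂)⁻¹
        = c a₂ b₂ * (1 - v a₂) * (1 - v a₂) := by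
      rw [hi_eq]
      field_simp
    rw [mul_add, h1, h2]
    exact hkey
  -- minimum principle for v + vt
  have hsh : ∀ x, x ≠ b₁ → x ≠ b₂ → x ≠ a₁ → x ≠ a₂ →
      ∑ y, c x y * ((v y + vt y) - (v x + vt x)) = 0 := by
    intro x h1 h2 h3 h4
    have hcv := hharm x h1 h2
    have hcvt := hharm' x h1 h2
    have hrw : ∀ y, c' x y = c x y := by
      intro y
      apply hc'rest <;> (intro heq; rw [Sym2.eq_iff] at heq; tauto)
    have hcvt2 : ∑ y, c x y * (vt y - vt x) = 0 := by
      rw [← hcvt]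
      exact Finset.sum_congr rfl fun y _ => by rw [hrw y]
    calc ∑ y, c x y * ((v y + vt y) - (v x + vt x))
        = ∑ y, (c x y * (v y - v x) + c x y * (vt y - vt x)) :=
          Finset.sum_congr rfl fun y _ => by ring
      _ = 0 := by rw [Finset.sum_add_distrib, hcv, hcvt2, add_zero]
  have hminp := aux_minprin c hsymm hnonneg a₁ a₂ b₁ b₂ hdeg₁ hdeg₂ hconn
    (fun x => v x + vt x) hsh w hwb₁ hwb₂
  -- values at a₁, a₂
  have hva₁ : v a₁ = (c a₁ b₁ * v a₁) * (c a₁ b₁)⁻¹ := by field_simp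
  have hvta₂ : vt a₂ = (c a₁ b₁ * v a₁) * (c a₁ b₁)⁻¹ := by rw [hij]; field_simp
  have hva₂ : v a₂ = 1 - (c a₁ b₁ * v a₁) * (c a₂ b₂)⁻¹ := by
    rw [hi_eq]; field_simp; ring
  have hvta₁ : vt a₁ = 1 - (c a₁ b₁ * v a₁) * (c a₂ b₂)⁻¹ := by
    have h3 : c a₂ b₂ * (1 - vt a₁) = c a₁ b₁ * v a₁ := by
      rw [hij]; linarith
    rw [← h3]; field_simp; ring
  have hval1 : v a₁ + vt a₁
      = 1 + (c a₁ b₁ * v a₁) * (c a₁ b₁)⁻¹ - (c a₁ b₁ * v a₁) * (c a₂ b₂)⁻¹ := by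
    linear_combination hva₁ + hvta₁
  have hval2 : v a₂ + vt a₂
      = 1 + (c a₁ b₁ * v a₁) * (c a₁ b₁)⁻¹ - (c a₁ b₁ * v a₁) * (c a₂ b₂)⁻¹ := by
    linear_combination hva₂ + hvta₂
  simp only [hval1, hval2, min_self] at hminp
  have harith := aux_arith (c a₁ b₁)⁻¹ (c a₂ b₂)⁻¹ (c a₁ b₁ * v a₁)
    (inv_pos.2 hg) (inv_pos.2 hh) hr hi0 hquad
  constructor
  · exact harith.trans hminp
  · intro ε₀ hε0 hε1 hεr
    have h2 := aux_arith2 (c a₁ b₁)⁻¹ (c a₂ b₂)⁻¹ ε₀ (inv_pos.2 hg) (inv_pos.2 hh) hε0 hεr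
    have hm1 := le_max_left (v w) (vt w)
    have hm2 := le_max_right (v w) (vt w)
    linarith [harith.trans hminp]
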